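/- Let H be a profinite group. The supernatural order of the abstract profinite completion Ĥ equals the supernatural order of H: o(Ĥ) = o(H). -/

import Mathlib

section Aux

variable {G : Type} [Group G] [TopologicalSpace G] [IsTopologicalGroup G]
  [CompactSpace G] [TotallyDisconnectedSpace G] [T2Space G]

/-- In a profinite group, an element lying in every open normal subgroup is trivial. -/
lemma aux_mem_all_open_normal_eq_one {w : G}
    (h : ∀ V : Subgroup G, V.Normal → IsOpen (V : Set G) → w ∈ V) : w = 1 := by
  by_contra hw
  have hopen : IsOpen ({w}ᶜ : Set G) := isOpen_compl_singleton
  have h1 : (1 : G) ∈ ({w}ᶜ : Set G) := by simpa using (Ne.symm hw)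
  obtain ⟨W, hWclopen, hW1, hWsub⟩ := compact_exists_isClopen_in_isOpen hopen h1
  obtain ⟨V, hV⟩ :=
    IsTopologicalGroup.exist_openNormalSubgroup_sub_clopen_nhds_of_one hWclopen hW1
  have hwV : w ∈ V.toSubgroup := h V.toSubgroup V.isNormal' V.toOpenSubgroup.isOpen
  exact (hWsub (hV hwV)) rfl

/-- If an open subgroup `V0` has `p`-prime relative index with respect to all open
normal subgroups, then `p`-th roots exist in `V0`. -/
lemma aux_pow_surj (V0 : Subgroup G) (hV0o : IsOpen (V0 : Set G)) (p : ℕ) (hp : p.Prime)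
    (hstar : ∀ V : Subgroup G, V.Normal → IsOpen (V : Set G) → ¬ p ∣ V.relIndex V0)
    {x0 : G} (hx0 : x0 ∈ V0) : ∃ y ∈ V0, y ^ p = x0 := by
  haveI : Nonempty {V : Subgroup G // V.Normal ∧ IsOpen (V : Set G)} :=
    ⟨⟨⊤, inferInstance, by simp⟩⟩
  set S : {V : Subgroup G // V.Normal ∧ IsOpen (V : Set G)} → Set G :=
    fun V => (V0 : Set G) ∩ (fun y => y ^ p * x0⁻¹) ⁻¹' (V.1 : Set G) with hSdef
  have hcont : Continuous (fun y : G => y ^ p * x0⁻¹) := (continuous_pow p).mul continuous_const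
  have hclosed : ∀ V, IsClosed (S V) := fun V =>
    (V0.isClosed_of_isOpen hV0o).inter ((V.1.isClosed_of_isOpen V.2.2).preimage hcont)
  have hne : ∀ V, (S V).Nonempty := by
    rintro ⟨V, hVn, hVo⟩
    haveI := hVn
    haveI : Finite (G ⧸ V) := V.quotient_finite_of_isOpen hVo
    set q := QuotientGroup.mk' V with hq
    have hrange : (q.comp V0.subtype).range = V0.map q := by
      rw [MonoidHom.range_comp, Subgroup.range_subtype]
    have hker : (q.comp V0.subtype).ker = V.subgroupOf V0 := by
      rw [← MonoidHom.comap_ker, QuotientGroup.ker_mk', Subgroup.comap_subtype]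
    have hcard : Nat.card (V0.map q) = V.relIndex V0 := by
      rw [← hrange, ← Subgroup.index_ker, hker, Subgroup.relIndex]
    have hcop : (Nat.card (V0.map q)).Coprime p := by
      rw [hcard]
      exact ((Nat.Prime.coprime_iff_not_dvd hp).mpr (hstar V hVn hVo)).symm
    obtain ⟨c, hc⟩ := (powCoprime hcop).surjective ⟨q x0, Subgroup.mem_map_of_mem q hx0⟩
    obtain ⟨z, hz, hz'⟩ := Subgroup.mem_map.mp c.2
    have hcp : (c : G ⧸ V) ^ p = q x0 := by
      have := congrArg Subtype.val hc
      simpa [powCoprime_apply] using this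
    refine ⟨z, hz, ?_⟩
    show z ^ p * x0⁻¹ ∈ (V : Set G)
    have : q (z ^ p * x0⁻¹) = 1 := by
      rw [map_mul, map_pow, map_inv, hz', hcp, mul_inv_cancel]
    simpa [hq] using (QuotientGroup.eq_one_iff _).mp this
  have hdir : Directed (· ⊇ ·) S := by
    rintro V W
    haveI := V.2.1
    haveI := W.2.1
    refine ⟨⟨V.1 ⊓ W.1, inferInstance, by rw [Subgroup.coe_inf]; exact V.2.2.inter W.2.2⟩,
      fun y hy => ⟨hy.1, ?_⟩, fun y hy => ⟨hy.1, ?_⟩⟩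
    · exact inf_le_left (α := Subgroup G) hy.2
    · exact inf_le_right (α := Subgroup G) hy.2
  obtain ⟨y, hy⟩ := IsCompact.nonempty_iInter_of_directed_nonempty_isCompact_isClosed S hdir
    hne (fun V => (hclosed V).isCompact) hclosed
  simp only [Set.mem_iInter] at hy
  have hyV0 : y ∈ V0 := (hy ⟨⊤, inferInstance, by simp⟩).1
  have hone : y ^ p * x0⁻¹ = 1 :=
    aux_mem_all_open_normal_eq_one (fun V hVn hVo => (hy ⟨V, hVn, hVo⟩).2)
  exact ⟨y, hyV0, by rwa [mul_inv_eq_one] at hone⟩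

/-- Key lemma: if `p ^ k` divides the index of an abstract normal subgroup of finite
index in a profinite group, then it divides the index of some open normal subgroup. -/
lemma aux_abstract_quotient {p k : ℕ} (hp : p.Prime) (N : Subgroup G) (hNn : N.Normal)
    (hfin : N.index ≠ 0) (hdvd : p ^ k ∣ N.index) :
    ∃ V : Subgroup G, V.Normal ∧ IsOpen (V : Set G) ∧ p ^ k ∣ V.index := by
  by_contra hcon
  push_neg at hcon
  set S : Set ℕ := {m | ∃ V : Subgroup G, V.Normal ∧ IsOpen (V : Set G) ∧ p ^ m ∣ V.index}
    with hSdef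
  have h0 : 0 ∈ S := ⟨⊤, inferInstance, by simp, by simp⟩
  have hbdd : ∀ m ∈ S, m < k := by
    rintro m ⟨V, hVn, hVo, hVd⟩
    by_contra hmk
    exact hcon V hVn hVo ((pow_dvd_pow p (not_lt.mp hmk)).trans hVd)
  have hbdd' : BddAbove S := ⟨k, fun m hm => (hbdd m hm).le⟩
  have hjS : sSup S ∈ S := Nat.sSup_mem ⟨0, h0⟩ hbdd'
  set j := sSup S with hj
  obtain ⟨V0, hV0n, hV0o, hV0d⟩ := hjS
  haveI : Finite (G ⧸ V0) := V0.quotient_finite_of_isOpen hV0o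
  haveI : V0.FiniteIndex := Subgroup.finiteIndex_of_finite_quotient (H := V0)
  have hstar : ∀ V : Subgroup G, V.Normal → IsOpen (V : Set G) → ¬ p ∣ V.relIndex V0 := by
    intro V hVn hVo hpd
    have key : (V ⊓ V0).relIndex V0 * V0.index = (V ⊓ V0).index :=
      Subgroup.relIndex_mul_index inf_le_right
    rw [Subgroup.inf_relIndex_right] at key
    have hdd : p ^ (j + 1) ∣ (V ⊓ V0).index := by
      rw [← key, pow_succ']
      exact mul_dvd_mul hpd hV0d
    have hmem : j + 1 ∈ S :=
      ⟨V ⊓ V0, (by haveI := hVn; haveI := hV0n; infer_instance),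
        (by rw [Subgroup.coe_inf]; exact hVo.inter hV0o), hdd⟩
    exact absurd (le_csSup hbdd' hmem) (by omega)
  haveI : N.FiniteIndex := ⟨hfin⟩
  set M := N ⊓ V0 with hM
  haveI : M.FiniteIndex := by rw [hM]; infer_instance
  have hNM : N.index ∣ M.index :=
    Dvd.intro_left (M.relIndex N) (Subgroup.relIndex_mul_index inf_le_left)
  have hMd : p ^ k ∣ M.index := hdvd.trans hNM
  have hkey : M.relIndex V0 * V0.index = M.index :=
    Subgroup.relIndex_mul_index inf_le_right
  have hs : p ∣ M.relIndex V0 := by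
    by_contra hnd
    have hcop : (p ^ k).Coprime (M.relIndex V0) :=
      Nat.Coprime.pow_left k ((Nat.Prime.coprime_iff_not_dvd hp).mpr hnd)
    have : p ^ k ∣ V0.index := hcop.dvd_of_dvd_mul_left (by rw [hkey]; exact hMd)
    exact hcon V0 hV0n hV0o this
  haveI := Fact.mk hp
  haveI : M.Normal := by haveI := hNn; haveI := hV0n; rw [hM]; infer_instance
  haveI : Finite (G ⧸ M) := Subgroup.finite_quotient_of_finiteIndex (H := M)
  set φ := (QuotientGroup.mk' M).comp V0.subtype with hφ
  have hkerφ : φ.ker = M.subgroupOf V0 := by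
    rw [hφ, ← MonoidHom.comap_ker, QuotientGroup.ker_mk', Subgroup.comap_subtype]
  have hcardT : Nat.card φ.range = M.relIndex V0 := by
    rw [← Subgroup.index_ker, hkerφ, Subgroup.relIndex]
  have hpT : p ∣ Nat.card φ.range := hcardT ▸ hs
  obtain ⟨x, hx⟩ := exists_prime_orderOf_dvd_card' (G := φ.range) p hpT
  have hsurj : Function.Surjective (fun t : φ.range => t ^ p) := by
    rintro ⟨t, ht⟩
    obtain ⟨v, hv⟩ := MonoidHom.mem_range.mp ht
    obtain ⟨y, hyV0, hyp⟩ := aux_pow_surj V0 hV0o p hp hstar v.2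
    refine ⟨⟨φ ⟨y, hyV0⟩, ⟨⟨y, hyV0⟩, rfl⟩⟩, ?_⟩
    apply Subtype.ext
    show (φ ⟨y, hyV0⟩) ^ p = t
    rw [← map_pow, ← hv]
    congr 1
    exact Subtype.ext (by simpa using hyp)
  have hinj := (Finite.injective_iff_surjective).mpr hsurj
  have hx1 : x = 1 := hinj (show x ^ p = (1 : φ.range) ^ p by
    rw [one_pow, ← hx, pow_orderOf_eq_one])
  rw [hx1, orderOf_one] at hx
  exact absurd hx.symm hp.one_lt.ne'

end Aux

/-- Let `H` be a profinite group with abstract profinite completion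
`i : H →* Hhat`.  Then the supernatural order of `Hhat` equals that of `H`:
for every prime `p` and every `k`, `p^k` divides the index of some open normal
subgroup of `Hhat` if and only if it divides the index of some open normal subgroup
of `H`. -/
theorem stmt_14 {H : Type} [Group H] [TopologicalSpace H] [IsTopologicalGroup H]
    [CompactSpace H] [TotallyDisconnectedSpace H] [T2Space H]
    {Hhat : Type} [Group Hhat] [TopologicalSpace Hhat] [IsTopologicalGroup Hhat]
    [CompactSpace Hhat] [TotallyDisconnectedSpace Hhat] [T2Space Hhat]
    (i : H →* Hhat) (hdense : DenseRange i)
    (huniv : ∀ (K : Type) [Group K] [Finite K] [TopologicalSpace K] [DiscreteTopology K]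
      (f : H →* K), ∃! fhat : Hhat →* K, Continuous fhat ∧ fhat.comp i = f)
    (p : ℕ) (hp : p.Prime) (k : ℕ) :
    (∃ U : Subgroup Hhat, U.Normal ∧ IsOpen (U : Set Hhat) ∧ p ^ k ∣ U.index) ↔
    (∃ U : Subgroup H, U.Normal ∧ IsOpen (U : Set H) ∧ p ^ k ∣ U.index) := by
  constructor
  · rintro ⟨U, hUn, hUo, hUd⟩
    haveI := hUn
    haveI : Finite (Hhat ⧸ U) := U.quotient_finite_of_isOpen hUo
    haveI : DiscreteTopology (Hhat ⧸ U) := QuotientGroup.discreteTopology hUo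
    set f := (QuotientGroup.mk' U).comp i with hf
    have hfsurj : Function.Surjective f := by
      intro q
      obtain ⟨x, rfl⟩ := QuotientGroup.mk'_surjective U q
      have hopen : IsOpen ((QuotientGroup.mk' U) ⁻¹' {QuotientGroup.mk' U x}) :=
        (isOpen_discrete _).preimage continuous_quotient_mk'
      obtain ⟨a, ha⟩ := hdense.exists_mem_open hopen ⟨x, rfl⟩
      exact ⟨a, ha⟩
    have hker : f.ker.index = U.index := by
      rw [Subgroup.index_ker, f.range_eq_top_of_surjective hfsurj, Subgroup.card_top,
        Subgroup.index_eq_card]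
    have hfin : f.ker.index ≠ 0 := by
      rw [hker]
      exact Subgroup.index_ne_zero_of_finite
    obtain ⟨V, hVn, hVo, hVd⟩ :=
      aux_abstract_quotient hp f.ker inferInstance hfin (hker ▸ hUd)
    exact ⟨V, hVn, hVo, hVd⟩
  · rintro ⟨U, hUn, hUo, hUd⟩
    haveI := hUn
    haveI : Finite (H ⧸ U) := U.quotient_finite_of_isOpen hUo
    letI : TopologicalSpace (H ⧸ U) := ⊥
    haveI : DiscreteTopology (H ⧸ U) := ⟨rfl⟩
    obtain ⟨fhat, ⟨hcont, hcomp⟩, -⟩ := huniv (H ⧸ U) (QuotientGroup.mk' U)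
    have hsurj : Function.Surjective fhat := by
      intro q
      obtain ⟨x, rfl⟩ := QuotientGroup.mk'_surjective U q
      exact ⟨i x, by rw [← hcomp]; rfl⟩
    refine ⟨fhat.ker, inferInstance, ?_, ?_⟩
    · have : (fhat.ker : Set Hhat) = fhat ⁻¹' {1} := by
        ext y
        simp [MonoidHom.mem_ker]
      rw [this]
      exact (isOpen_discrete _).preimage hcont
    · have hker : fhat.ker.index = U.index := by
        rw [Subgroup.index_ker, fhat.range_eq_top_of_surjective hsurj, Subgroup.card_top,
          Subgroup.index_eq_card]
      rw [hker]
      exact hUd
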